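/- arXiv:2510.20765 — 2 statements merged into one kernel-verified Lean document; each statement's English description precedes it below -/
import Mathlib

section
/- There is an absolute constant c* > 0 such that the following holds for every λ with 0 < λ ≤ c*. Let n ∈ ℕ, d, δ > 0, K ∈ 𝒦_d(n), and let F be a graph on [n] satisfying: (B1) d_{F∖K}(v) ≤ (1+λ)δ for every v ∈ [n]; (B2) for every v ∈ [n], Σ_{u ∈ N_{F∖K}(v)} Σ_{u' ∈ N_K(u)} d_{F∖K}(u') ≤ (1 + λ/log n)·δ·d·d_{F∖K}(v). Then for every integer ℓ with 1 ≤ ℓ ≤ 10·log n and every v ∈ [n], the number of (F∖K, K)-alternating paths of length 2ℓ starting at v is at most (1+30λ)·d^ℓ·δ^ℓ. (Lemma 5.2.) -/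
open scoped Classical ENNReal

noncomputable section

namespace Sandwich

variable {n : ℕ}

/-- The degree of the vertex `v` in the graph `G`. -/
def deg (G : SimpleGraph (Fin n)) (v : Fin n) : ℕ := Nat.card (G.neighborSet v)

/-- `G` is a `d`-regular graph. -/
def IsRegularGraph (G : SimpleGraph (Fin n)) (d : ℕ) : Prop := ∀ v, deg G v = d

/-- The number of edges of `G`. -/
def edgeCount (G : SimpleGraph (Fin n)) : ℕ := G.edgeSet.ncard

/-- The probability of the event `P` under the probability mass function `μ`. -/
def prEvent {α : Type*} (μ : PMF α) (P : α → Prop) : ℝ≥0∞ := ∑' a, if P a then μ a else 0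

/-- `μ` is the uniform distribution on the set `S`. -/
def IsUniformOn {α : Type*} (μ : PMF α) (S : Set α) : Prop :=
  ∀ a, μ a = if a ∈ S then (S.ncard : ℝ≥0∞)⁻¹ else 0

/-- `P` lists the `k+1` vertices of a `(G₁,G₂)`-alternating path of length `k`: the vertices
are distinct and consecutive vertices are joined by an edge of `G₁` (for steps of even index)
or of `G₂` (for steps of odd index). -/
def IsAltSeq (G₁ G₂ : SimpleGraph (Fin n)) (k : ℕ) (P : Fin (k + 1) → Fin n) : Prop :=
  Function.Injective P ∧
    ∀ i : Fin k, if (i : ℕ) % 2 = 0 then G₁.Adj (P i.castSucc) (P i.succ)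
      else G₂.Adj (P i.castSucc) (P i.succ)

/-- The number of `(G₁,G₂)`-alternating `x,y`-paths of length `k` with no internal vertex
in `Z`. -/
def altPathCount (G₁ G₂ : SimpleGraph (Fin n)) (k : ℕ) (x y : Fin n) (Z : Set (Fin n)) : ℕ :=
  Nat.card {P : Fin (k + 1) → Fin n // IsAltSeq G₁ G₂ k P ∧ P 0 = x ∧ P (Fin.last k) = y ∧
    ∀ i : Fin (k + 1), i ≠ 0 → i ≠ Fin.last k → P i ∉ Z}

/-- The number of `(G₁,G₂)`-alternating paths of length `k` starting at `x`. -/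
def altStartCount (G₁ G₂ : SimpleGraph (Fin n)) (k : ℕ) (x : Fin n) : ℕ :=
  Nat.card {P : Fin (k + 1) → Fin n // IsAltSeq G₁ G₂ k P ∧ P 0 = x}

/-- The external neighbourhood `N_G(U)` of a set of vertices `U`. -/
def nbhd (G : SimpleGraph (Fin n)) (U : Set (Fin n)) : Set (Fin n) :=
  {v | v ∉ U ∧ ∃ u ∈ U, G.Adj u v}

/-- `e_G(U)`, the number of edges of `G` with both endpoints in `U`. -/
def edgesWithin (G : SimpleGraph (Fin n)) (U : Set (Fin n)) : ℕ :=
  {e ∈ G.edgeSet | ∀ v ∈ e, v ∈ U}.ncard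

/-- `e_G(U,V) = |{(u,v) : u ∈ U, v ∈ V, uv ∈ E(G)}|`. -/
def edgesBetween (G : SimpleGraph (Fin n)) (U V : Set (Fin n)) : ℕ :=
  {p : Fin n × Fin n | p.1 ∈ U ∧ p.2 ∈ V ∧ G.Adj p.1 p.2}.ncard

/-- `|E_{≥2,G}(U)|`, the number of edges `xy ∈ E(G)` with `x ∈ U`, `y ∉ U` such that some
`x' ∈ U ∖ {x}` also satisfies `x'y ∈ E(G)`. -/
def E2count (G : SimpleGraph (Fin n)) (U : Set (Fin n)) : ℕ :=
  {e : Sym2 (Fin n) | e ∈ G.edgeSet ∧ ∃ x y, e = s(x, y) ∧ x ∈ U ∧ y ∉ U ∧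
    ∃ x' ∈ U, x' ≠ x ∧ G.Adj x' y}.ncard

/-- `Σ_{u ∈ N_{F∖K}(v)} Σ_{u' ∈ N_K(u)} d_{F∖K}(u')`. -/
def doubleDegSum (F K : SimpleGraph (Fin n)) (v : Fin n) : ℝ :=
  ∑ u : Fin n, if (F \ K).Adj v u then
    ∑ u' : Fin n, if K.Adj u u' then (deg (F \ K) u' : ℝ) else 0
  else 0

/-- `μ` is the law of the binomial random graph `G(n,p)`. -/
def IsGnp (μ : PMF (SimpleGraph (Fin n))) (p : ℝ) : Prop :=
  ∀ G, μ G = ENNReal.ofReal (p ^ edgeCount G * (1 - p) ^ (n.choose 2 - edgeCount G))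

/-- `μ` is the law of `G(n,p)`, where `p` is truncated to `[0,1]` (so that `G(n,p)` is the
empty graph for `p ≤ 0` and the complete graph for `p ≥ 1`). -/
def IsGnpLaw (μ : PMF (SimpleGraph (Fin n))) (p : ℝ) : Prop :=
  IsGnp μ (max 0 (min p 1))

/-- `μ` is the law of `K + E`, where `E` includes each pair not in `E(K)` independently with
probability `p`. -/
def IsAddGnp (μ : PMF (SimpleGraph (Fin n))) (K : SimpleGraph (Fin n)) (p : ℝ) : Prop :=
  ∀ F, μ F = if K ≤ F then
      ENNReal.ofReal (p ^ (edgeCount F - edgeCount K) * (1 - p) ^ (n.choose 2 - edgeCount F))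
    else 0

/-- `ν` is the joint law of `(K, F)` where `K ~ G_d(n)` is a uniformly random `d`-regular graph
and `F = K + E`, `E` including each pair not in `E(K)` independently with probability `p`. -/
def IsRegAddGnp (ν : PMF (SimpleGraph (Fin n) × SimpleGraph (Fin n))) (d : ℕ) (p : ℝ) : Prop :=
  ∀ w, ν w = if IsRegularGraph w.1 d ∧ w.1 ≤ w.2 then
      ({G : SimpleGraph (Fin n) | IsRegularGraph G d}.ncard : ℝ≥0∞)⁻¹ *
        ENNReal.ofReal (p ^ (edgeCount w.2 - edgeCount w.1) *
          (1 - p) ^ (n.choose 2 - edgeCount w.2))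
    else 0

/-- `ν` is the joint law of an independent pair `(K, F)` with `K ~ G_d(n)` and `F ~ G(n,q)`. -/
def IsRegIndepGnp (ν : PMF (SimpleGraph (Fin n) × SimpleGraph (Fin n))) (d : ℕ) (q : ℝ) :
    Prop :=
  ∀ w, ν w = (if IsRegularGraph w.1 d then
      ({G : SimpleGraph (Fin n) | IsRegularGraph G d}.ncard : ℝ≥0∞)⁻¹ else 0) *
      ENNReal.ofReal (q ^ edgeCount w.2 * (1 - q) ^ (n.choose 2 - edgeCount w.2))


lemma deg_eq (G : SimpleGraph (Fin n)) (v : Fin n) : deg G v = (G.neighborFinset v).card := by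
  rw [deg, Nat.card_eq_fintype_card, SimpleGraph.neighborFinset, Set.toFinset_card]


def AltWalk (G₁ G₂ : SimpleGraph (Fin n)) (k : ℕ) (P : Fin (k + 1) → Fin n) : Prop :=
  ∀ i : Fin k, if (i : ℕ) % 2 = 0 then G₁.Adj (P i.castSucc) (P i.succ)
    else G₂.Adj (P i.castSucc) (P i.succ)


def wpair : ℕ → SimpleGraph (Fin n) → SimpleGraph (Fin n) → Fin n → ℕ
  | 0 => fun _ _ _ => 1
  | (k+1) => fun G₁ G₂ x => ∑ y ∈ G₁.neighborFinset x, wpair k G₂ G₁ y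

lemma wpair_zero (G₁ G₂ : SimpleGraph (Fin n)) (x : Fin n) : wpair 0 G₁ G₂ x = 1 := rfl

lemma wpair_succ (k : ℕ) (G₁ G₂ : SimpleGraph (Fin n)) (x : Fin n) :
    wpair (k+1) G₁ G₂ x = ∑ y ∈ G₁.neighborFinset x, wpair k G₂ G₁ y := rfl

lemma wpair_one (G₁ G₂ : SimpleGraph (Fin n)) (x : Fin n) :
    wpair 1 G₁ G₂ x = (G₁.neighborFinset x).card := by
  rw [wpair_succ]
  simp [wpair_zero]


lemma card_walk (k : ℕ) (G₁ G₂ : SimpleGraph (Fin n)) (x : Fin n) :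
    (Finset.univ.filter fun P : Fin (k + 1) → Fin n => AltWalk G₁ G₂ k P ∧ P 0 = x).card
      = wpair k G₁ G₂ x := by
  induction k generalizing G₁ G₂ x with
  | zero =>
    rw [wpair_zero, Finset.card_eq_one]
    refine ⟨fun _ => x, ?_⟩
    ext P
    simp only [Finset.mem_filter, Finset.mem_univ, true_and, Finset.mem_singleton]
    constructor
    · rintro ⟨-, h0⟩
      funext i
      have : i = 0 := Fin.fin_one_eq_zero i
      rw [this, h0]
    · rintro rfl
      exact ⟨fun i => i.elim0, rfl⟩
  | succ k ih =>
    rw [wpair_succ]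
    rw [Finset.card_eq_sum_card_fiberwise (t := G₁.neighborFinset x)
      (f := fun P => P (Fin.succ 0)) ?_]
    · refine Finset.sum_congr rfl fun y hy => ?_
      rw [← ih G₂ G₁ y]
      refine Finset.card_bij (fun P _ => P ∘ Fin.succ) ?_ ?_ ?_
      · rintro P hP
        simp only [Finset.mem_filter, Finset.mem_univ, true_and] at hP ⊢
        obtain ⟨⟨hW, h0⟩, h1⟩ := hP
        refine ⟨fun i => ?_, h1⟩
        have := hW i.succ
        have hcs : (i.succ).castSucc = (i.castSucc).succ := (Fin.succ_castSucc i).symm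
        rw [hcs] at this
        simp only [Fin.val_succ] at this
        rcases Nat.mod_two_eq_zero_or_one (i : ℕ) with h | h
        · have h2 : ((i : ℕ) + 1) % 2 = 1 := by omega
          simp only [h, h2] at this ⊢
          simpa using this
        · have h2 : ((i : ℕ) + 1) % 2 = 0 := by omega
          simp only [h, h2] at this ⊢
          simpa using this
      · rintro P hP Q hQ hPQ
        simp only [Finset.mem_filter, Finset.mem_univ, true_and] at hP hQ
        funext i
        induction i using Fin.cases with
        | zero => rw [hP.1.2, hQ.1.2]
        | succ j => exact congrFun hPQ j
      · rintro Q hQ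
        simp only [Finset.mem_filter, Finset.mem_univ, true_and] at hQ
        obtain ⟨hW, h0⟩ := hQ
        refine ⟨Fin.cases x Q, ?_, ?_⟩
        · simp only [Finset.mem_filter, Finset.mem_univ, true_and]
          have h1 : (1 : Fin (k+2)) = Fin.succ 0 := by ext; simp
          refine ⟨⟨fun i => ?_, by simp⟩, ?_⟩
          swap
          · show Fin.cases x Q (Fin.succ 0) = y
            rw [Fin.cases_succ, h0]
          induction i using Fin.cases with
          | zero =>
            simp only [Fin.val_zero, Nat.zero_mod, if_true]
            have : (0 : Fin (k+2)) = Fin.castSucc 0 := rfl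
            rw [← this]
            simp only [Fin.cases_zero, Fin.succ_zero_eq_one]
            rw [h1, Fin.cases_succ, h0]
            rw [SimpleGraph.mem_neighborFinset] at hy
            exact hy
          | succ j =>
            have := hW j
            have hcs : (j.succ).castSucc = (j.castSucc).succ := (Fin.succ_castSucc j).symm
            rw [hcs]
            simp only [Fin.cases_succ]
            simp only [Fin.val_succ]
            rcases Nat.mod_two_eq_zero_or_one (j : ℕ) with h | h
            · have h2 : ((j : ℕ) + 1) % 2 = 1 := by omega
              simp only [h, h2] at this ⊢
              exact this
            · have h2 : ((j : ℕ) + 1) % 2 = 0 := by omega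
              simp only [h, h2] at this ⊢
              exact this
        · funext j
          simp [Function.comp]
    · rintro P hP
      simp only [Finset.mem_coe, Finset.mem_filter, Finset.mem_univ, true_and] at hP
      obtain ⟨hW, h0⟩ := hP
      have := hW 0
      simp only [Fin.val_zero, Nat.zero_mod, if_true] at this
      rw [Finset.mem_coe, SimpleGraph.mem_neighborFinset]
      have hc : (Fin.castSucc (0 : Fin (k+1))) = (0 : Fin (k+2)) := rfl
      rw [hc, h0] at this
      exact this


lemma doubleDegSum_eq (F K : SimpleGraph (Fin n)) (v : Fin n) :
    doubleDegSum F K v =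
      ∑ u ∈ (F \ K).neighborFinset v, ∑ u' ∈ K.neighborFinset u, (deg (F \ K) u' : ℝ) := by
  rw [doubleDegSum]
  rw [← Finset.sum_filter]
  rw [show (F \ K).neighborFinset v = Finset.univ.filter (fun u => (F \ K).Adj v u) from by
    ext u; simp]
  refine Finset.sum_congr rfl fun u _ => ?_
  rw [← Finset.sum_filter]
  congr 1
  ext u'; simp


lemma wpair_bound (G₁ G₂ : SimpleGraph (Fin n)) (d : ℕ) (C δ : ℝ)
    (hC : 0 ≤ C) (hδ : 0 ≤ δ) (hreg : ∀ y, deg G₂ y = d)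
    (hdd : ∀ v, ∑ u ∈ G₁.neighborFinset v, ∑ u' ∈ G₂.neighborFinset u,
        (deg G₁ u' : ℝ)
      ≤ C * δ * d * (deg G₁ v : ℝ)) :
    ∀ k x, (wpair (2*k+2) G₁ G₂ x : ℝ)
      ≤ (C*δ*d)^k * d * (deg G₁ x : ℝ) := by
  intro k
  induction k with
  | zero =>
    intro x
    rw [show 2*0+2 = 1+1 from rfl, wpair_succ]
    push_cast
    have h : ∀ y ∈ G₁.neighborFinset x, (wpair 1 G₂ G₁ y : ℝ) = (d : ℝ) := by
      intro y _
      rw [wpair_one, ← deg_eq, hreg y]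
    rw [Finset.sum_congr rfl h, Finset.sum_const, nsmul_eq_mul]
    rw [pow_zero, one_mul, deg_eq, mul_comm]
  | succ k ih =>
    intro x
    rw [show 2*(k+1)+2 = (2*k+2+1)+1 from by ring, wpair_succ]
    push_cast
    have step1 : ∀ y, (wpair (2*k+2+1) G₂ G₁ y : ℝ)
        = ∑ z ∈ G₂.neighborFinset y, (wpair (2*k+2) G₁ G₂ z : ℝ) := by
      intro y
      rw [wpair_succ]
      push_cast
      rfl
    calc ∑ y ∈ G₁.neighborFinset x, (wpair (2*k+2+1) G₂ G₁ y : ℝ)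
        = ∑ y ∈ G₁.neighborFinset x, ∑ z ∈ G₂.neighborFinset y,
            (wpair (2*k+2) G₁ G₂ z : ℝ) := Finset.sum_congr rfl fun y _ => step1 y
      _ ≤ ∑ y ∈ G₁.neighborFinset x, ∑ z ∈ G₂.neighborFinset y,
            (C*δ*d)^k * d * (deg G₁ z : ℝ) := by
          refine Finset.sum_le_sum fun y _ => Finset.sum_le_sum fun z _ => ih z
      _ = (C*δ*d)^k * d * ∑ y ∈ G₁.neighborFinset x, ∑ z ∈ G₂.neighborFinset y,
            (deg G₁ z : ℝ) := by
          rw [Finset.mul_sum]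
          refine Finset.sum_congr rfl fun y _ => ?_
          rw [Finset.mul_sum]
      _ ≤ (C*δ*d)^k * d * (C * δ * d * (deg G₁ x : ℝ)) := by
          refine mul_le_mul_of_nonneg_left (hdd x) ?_
          positivity
      _ = (C*δ*d)^(k+1) * d * (deg G₁ x : ℝ) := by ring

lemma altStartCount_le (G₁ G₂ : SimpleGraph (Fin n)) (k : ℕ) (x : Fin n) :
    altStartCount G₁ G₂ k x ≤ wpair k G₁ G₂ x := by
  rw [← card_walk, altStartCount]
  have h1 : Nat.card {P : Fin (k+1) → Fin n // IsAltSeq G₁ G₂ k P ∧ P 0 = x}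
      = (Finset.univ.filter fun P : Fin (k+1) → Fin n =>
          IsAltSeq G₁ G₂ k P ∧ P 0 = x).card := by
    rw [Nat.card_eq_fintype_card, Fintype.card_subtype]
  rw [h1]
  apply Finset.card_le_card
  intro P hP
  simp only [Finset.mem_filter, Finset.mem_univ, true_and] at hP ⊢
  exact ⟨hP.1.2, hP.2⟩


set_option maxHeartbeats 2000000 in
/-- **Lemma 5.2.** There is an absolute constant `c* > 0` such that for every
`λ ∈ (0,c*]`, every `n`, `d > 0`, `δ > 0`, `K ∈ 𝒦_d(n)` and graph `F` on `[n]`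
satisfying (B1) `d_{F∖K}(v) ≤ (1+λ)δ` for all `v`, and (B2)
`Σ_{u∈N_{F∖K}(v)} Σ_{u'∈N_K(u)} d_{F∖K}(u') ≤ (1 + λ/log n)·δ·d·d_{F∖K}(v)` for all `v`,
the following holds: for every integer `1 ≤ ℓ ≤ 10 log n` and every `v`, the number of
`(F∖K,K)`-alternating paths of length `2ℓ` starting at `v` is at most `(1+30λ)·d^ℓ·δ^ℓ`. -/
theorem upper_bound_paths_pseudorandom :
    ∃ cstar : ℝ, 0 < cstar ∧
      ∀ lam : ℝ, 0 < lam → lam ≤ cstar →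
        ∀ n d : ℕ, ∀ δ : ℝ, 0 < d → 0 < δ →
          ∀ K F : SimpleGraph (Fin n), IsRegularGraph K d →
            (∀ v, (deg (F \ K) v : ℝ) ≤ (1 + lam) * δ) →
            (∀ v, doubleDegSum F K v ≤
              (1 + lam / Real.log n) * δ * d * (deg (F \ K) v : ℝ)) →
            ∀ ℓ : ℕ, 1 ≤ ℓ → (ℓ : ℝ) ≤ 10 * Real.log n →
              ∀ v : Fin n,
                (altStartCount (F \ K) K (2 * ℓ) v : ℝ) ≤
                  (1 + 30 * lam) * (d : ℝ) ^ ℓ * δ ^ ℓ := by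
  refine ⟨1/100, by norm_num, ?_⟩
  intro lam hlam hlamle n d δ hd hδ K F hK hB1 hB2 ℓ hℓ1 hℓn v
  obtain ⟨m, rfl⟩ : ∃ m, ℓ = m + 1 := ⟨ℓ - 1, by omega⟩
  have hm1 : ((m:ℝ) + 1) ≤ 10 * Real.log n := by exact_mod_cast hℓn
  have hL0 : 0 < Real.log n := by nlinarith [(Nat.cast_nonneg m : (0:ℝ) ≤ (m:ℝ))]
  set C : ℝ := 1 + lam / Real.log n with hCdef
  have hC1 : 1 ≤ C := by
    have h0 : 0 ≤ lam / Real.log n := div_nonneg hlam.le hL0.le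
    rw [hCdef]
    linarith
  have hC0 : 0 ≤ C := by linarith
  have hd0 : (0:ℝ) ≤ (d:ℝ) := Nat.cast_nonneg d
  have key : (wpair (2*m+2) (F \ K) K v : ℝ)
      ≤ (C*δ*d)^m * d * (deg (F \ K) v : ℝ) := by
    refine wpair_bound (F \ K) K d C δ hC0 hδ.le hK ?_ m v
    intro w
    have h2 := le_of_eq_of_le (doubleDegSum_eq F K w).symm (hB2 w)
    convert h2 using 2
    congr!
  have h1 : (altStartCount (F \ K) K (2*(m+1)) v : ℝ) ≤ (wpair (2*m+2) (F \ K) K v : ℝ) := by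
    have h := altStartCount_le (F \ K) K (2*(m+1)) v
    rw [show 2*(m+1) = 2*m+2 from by ring] at h
    exact_mod_cast h
  have hdeg : ((deg (F \ K) v : ℝ)) ≤ (1 + lam) * δ := hB1 v
  -- numeric bound : C^m * (1 + lam) ≤ 1 + 30 * lam
  have hCm : C ^ m * (1 + lam) ≤ 1 + 30 * lam := by
    have e1 : C ≤ Real.exp (lam / Real.log n) := by
      have := Real.add_one_le_exp (lam / Real.log n)
      linarith
    have e2 : C ^ m ≤ Real.exp (lam / Real.log n) ^ m :=
      pow_le_pow_left₀ hC0 e1 m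
    have e3 : Real.exp (lam / Real.log n) ^ m = Real.exp ((m:ℝ) * (lam / Real.log n)) :=
      (Real.exp_nat_mul _ m).symm
    have e4 : (m:ℝ) * (lam / Real.log n) ≤ 10 * lam := by
      rw [mul_div_assoc', div_le_iff₀ hL0]
      nlinarith
    have e5 : C ^ m ≤ Real.exp (10 * lam) := by
      rw [e3] at e2
      exact e2.trans (Real.exp_le_exp.mpr e4)
    have hE : Real.exp (10 * lam) * (1 - 10 * lam) ≤ 1 := by
      have := Real.add_one_le_exp (-(10 * lam))
      have h6 : (1 - 10 * lam) ≤ Real.exp (-(10 * lam)) := by linarith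
      calc Real.exp (10 * lam) * (1 - 10 * lam)
          ≤ Real.exp (10 * lam) * Real.exp (-(10 * lam)) :=
            mul_le_mul_of_nonneg_left h6 (Real.exp_pos _).le
        _ = 1 := by rw [← Real.exp_add]; simp
    have hEpos := (Real.exp_pos (10 * lam)).le
    have hCmpos : 0 ≤ C ^ m := pow_nonneg hC0 m
    nlinarith [mul_le_mul_of_nonneg_left hE (by linarith : (0:ℝ) ≤ 1 + lam),
      mul_le_mul_of_nonneg_right e5 (by linarith : (0:ℝ) ≤ 1 + lam)]
  calc (altStartCount (F \ K) K (2*(m+1)) v : ℝ)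
      ≤ (wpair (2*m+2) (F \ K) K v : ℝ) := h1
    _ ≤ (C*δ*d)^m * d * (deg (F \ K) v : ℝ) := key
    _ ≤ (C*δ*d)^m * d * ((1 + lam) * δ) := by
        refine mul_le_mul_of_nonneg_left hdeg ?_
        positivity
    _ = (C ^ m * (1 + lam)) * ((d:ℝ) ^ (m+1) * δ ^ (m+1)) := by
        rw [mul_pow, mul_pow]
        ring
    _ ≤ (1 + 30 * lam) * ((d:ℝ) ^ (m+1) * δ ^ (m+1)) := by
        refine mul_le_mul_of_nonneg_right hCm ?_
        positivity
    _ = (1 + 30 * lam) * (d:ℝ) ^ (m+1) * δ ^ (m+1) := by ring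


end Sandwich
end
end

section
/- There is c* > 0 such that for every ε ∈ (0,1] and every σ ∈ (0, c*] there is C > 0 such that for every c > 0 there is n₀ ∈ ℕ with the following property for all n ≥ n₀. Let λ and d satisfy (log n)^{−3} ≤ λ ≤ c*, 10³·d ≤ λ·n, d ≥ C·log n and dn even; let m be an integer with ε·d·n ≤ m ≤ n^{1+σ}; set δ = 2m/n and suppose λ·δ ≥ C·log n; set p = m·(binom(n,2) − dn/2)^{−1}. Let K ~ G_d(n), form E by including each element of [n]^(2)∖E(K) independently with probability p, and let F = K + E. Then with probability at least 1 − c·n^{−14} the following holds: for each U ⊆ [n] with |U| ≤ λn/(100·δ·log n), if there is some U' ⊆ [n] with |U'| ≤ 4|U|/d and U ⊆ U' ∪ N_K(U'), then e_{F∖K}(U) ≤ (λ/(2·log n))·δ·|U|. (Lemma 6.6.) -/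
open scoped Classical ENNReal

noncomputable section

namespace Sandwich

variable {n : ℕ}

lemma edgeCount_eq (G : SimpleGraph (Fin n)) : edgeCount G = G.edgeFinset.card := by
  simp [edgeCount, SimpleGraph.edgeFinset, Set.ncard_eq_toFinset_card']

lemma card_edgeFinset_compl (G : SimpleGraph (Fin n)) :
    Gᶜ.edgeFinset.card = n.choose 2 - G.edgeFinset.card := by
  have hdisj : Disjoint G.edgeFinset Gᶜ.edgeFinset := by
    rw [Finset.disjoint_left]
    intro e he he'
    rw [SimpleGraph.mem_edgeFinset] at he he'
    induction e with
    | _ a b =>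
      rw [SimpleGraph.mem_edgeSet] at he he'
      exact he'.2 he
  have hunion : G.edgeFinset ∪ Gᶜ.edgeFinset = (⊤ : SimpleGraph (Fin n)).edgeFinset := by
    ext e
    simp only [Finset.mem_union, SimpleGraph.mem_edgeFinset]
    induction e with
    | _ a b =>
      simp only [SimpleGraph.mem_edgeSet, SimpleGraph.compl_adj, SimpleGraph.top_adj]
      constructor
      · rintro (h | h)
        · exact h.ne
        · exact h.1
      · intro h
        by_cases hG : G.Adj a b
        · exact Or.inl hG
        · exact Or.inr ⟨h, hG⟩
  have hcard := Finset.card_union_of_disjoint hdisj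
  rw [hunion] at hcard
  have htop : (⊤ : SimpleGraph (Fin n)).edgeFinset.card = n.choose 2 := by
    rw [SimpleGraph.card_edgeFinset_top_eq_card_choose_two, Fintype.card_fin]
  omega

lemma sum_powerset_prob {β : Type*} [DecidableEq β] (P : Finset β) (p : ℝ) :
    ∑ T ∈ P.powerset, p ^ T.card * (1 - p) ^ (P.card - T.card) = 1 := by
  have h := Finset.prod_add (fun _ : β => p) (fun _ : β => 1 - p) P
  simp only [add_sub_cancel, Finset.prod_const, one_pow] at h
  have h2 : ∑ T ∈ P.powerset, p ^ T.card * (1 - p) ^ (P.card - T.card)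
      = ∑ T ∈ P.powerset, p ^ T.card * (1 - p) ^ (P \ T).card := by
    apply Finset.sum_congr rfl
    intro T hT
    rw [Finset.mem_powerset] at hT
    rw [Finset.card_sdiff_of_subset hT]
  rw [h2, ← h]

lemma sum_over_ext (K H : SimpleGraph (Fin n)) (hKH : K ≤ H) {p : ℝ} (hp0 : 0 ≤ p)
    (hp1 : p ≤ 1) :
    ∑ F : SimpleGraph (Fin n), (if H ≤ F then
        ENNReal.ofReal (p ^ (edgeCount F - edgeCount K) *
          (1 - p) ^ (n.choose 2 - edgeCount F)) else 0)
      = ENNReal.ofReal (p ^ (edgeCount H - edgeCount K)) := by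
  have hq0 : (0:ℝ) ≤ 1 - p := by linarith
  have hKHc : edgeCount K ≤ edgeCount H := by
    rw [edgeCount_eq, edgeCount_eq]
    exact Finset.card_le_card (by
      intro e he
      rw [SimpleGraph.mem_edgeFinset] at he ⊢
      exact SimpleGraph.edgeSet_mono hKH he)
  have hHc2 : edgeCount H ≤ n.choose 2 := by
    rw [edgeCount_eq]
    have := SimpleGraph.card_edgeFinset_le_card_choose_two (G := H)
    rwa [Fintype.card_fin] at this
  classical
  rw [← Finset.sum_filter]
  have key : ∑ F ∈ Finset.univ.filter (fun F : SimpleGraph (Fin n) => H ≤ F),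
      ENNReal.ofReal (p ^ (edgeCount F - edgeCount K) * (1 - p) ^ (n.choose 2 - edgeCount F))
      = ∑ T ∈ Hᶜ.edgeFinset.powerset,
        ENNReal.ofReal (p ^ ((edgeCount H + T.card) - edgeCount K) *
          (1 - p) ^ (n.choose 2 - (edgeCount H + T.card))) := by
    apply Finset.sum_nbij' (i := fun F => F.edgeFinset \ H.edgeFinset)
      (j := fun T => H ⊔ SimpleGraph.fromEdgeSet ↑T)
    · intro F hF
      rw [Finset.mem_filter] at hF
      rw [Finset.mem_powerset]
      intro e he
      rw [Finset.mem_sdiff, SimpleGraph.mem_edgeFinset] at he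
      rw [SimpleGraph.mem_edgeFinset]
      induction e with
      | _ a b =>
        rw [SimpleGraph.mem_edgeSet, SimpleGraph.compl_adj]
        rw [SimpleGraph.mem_edgeSet] at he
        refine ⟨(SimpleGraph.Adj.ne he.1), fun h => he.2 ?_⟩
        rw [SimpleGraph.mem_edgeFinset, SimpleGraph.mem_edgeSet]
        exact h
    · intro T hT
      rw [Finset.mem_filter]
      exact ⟨Finset.mem_univ _, le_sup_left⟩
    · -- left inverse
      intro F hF
      rw [Finset.mem_filter] at hF
      apply SimpleGraph.edgeSet_injective
      rw [SimpleGraph.edgeSet_sup, SimpleGraph.edgeSet_fromEdgeSet, Finset.coe_sdiff,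
        SimpleGraph.coe_edgeFinset, SimpleGraph.coe_edgeFinset]
      have h1 : (F.edgeSet \ H.edgeSet) \ Sym2.diagSet
          = F.edgeSet \ H.edgeSet := by
        ext e
        constructor
        · exact fun h => h.1
        · intro h
          exact ⟨h, fun hd => F.not_isDiag_of_mem_edgeSet h.1 hd⟩
      rw [h1, Set.union_diff_cancel (SimpleGraph.edgeSet_mono hF.2)]
    · -- right inverse
      intro T hT
      rw [Finset.mem_powerset] at hT
      have hTsub : (T : Set (Sym2 (Fin n))) ⊆ Hᶜ.edgeSet := by
        intro e he
        have := hT he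
        rwa [SimpleGraph.mem_edgeFinset] at this
      apply Finset.coe_injective
      rw [Finset.coe_sdiff, SimpleGraph.coe_edgeFinset, SimpleGraph.coe_edgeFinset,
        SimpleGraph.edgeSet_sup, SimpleGraph.edgeSet_fromEdgeSet]
      have h1 : (T : Set (Sym2 (Fin n))) \ Sym2.diagSet
          = (T : Set (Sym2 (Fin n))) := by
        ext e
        constructor
        · exact fun h => h.1
        · intro h
          exact ⟨h, fun hd => Hᶜ.not_isDiag_of_mem_edgeSet (hTsub h) hd⟩
      rw [h1]
      have h2 : Disjoint H.edgeSet (T : Set (Sym2 (Fin n))) := by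
        rw [Set.disjoint_left]
        intro e heH heT
        have := hTsub heT
        induction e with
        | _ a b =>
          rw [SimpleGraph.mem_edgeSet, SimpleGraph.compl_adj] at this
          rw [SimpleGraph.mem_edgeSet] at heH
          exact this.2 heH
      rw [Set.union_diff_cancel_left (Set.disjoint_iff.1 h2)]
    · -- value equality
      intro F hF
      rw [Finset.mem_filter] at hF
      have hsub : H.edgeFinset ⊆ F.edgeFinset := by
        intro e he
        rw [SimpleGraph.mem_edgeFinset] at he ⊢
        exact SimpleGraph.edgeSet_mono hF.2 he
      have hcard : (F.edgeFinset \ H.edgeFinset).card = F.edgeFinset.card - H.edgeFinset.card :=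
        Finset.card_sdiff_of_subset hsub
      have hle := Finset.card_le_card hsub
      have hFc : edgeCount F = edgeCount H + (F.edgeFinset \ H.edgeFinset).card := by
        rw [edgeCount_eq, edgeCount_eq, hcard]
        omega
      rw [hFc]
  rw [key]
  have hPcard : Hᶜ.edgeFinset.card = n.choose 2 - edgeCount H := by
    rw [card_edgeFinset_compl, edgeCount_eq]
  have hterm : ∀ T ∈ Hᶜ.edgeFinset.powerset,
      ENNReal.ofReal (p ^ ((edgeCount H + T.card) - edgeCount K) *
        (1 - p) ^ (n.choose 2 - (edgeCount H + T.card)))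
      = ENNReal.ofReal (p ^ (edgeCount H - edgeCount K) *
          (p ^ T.card * (1 - p) ^ (Hᶜ.edgeFinset.card - T.card))) := by
    intro T hT
    congr 1
    have h1 : (edgeCount H + T.card) - edgeCount K = (edgeCount H - edgeCount K) + T.card := by
      omega
    have h2 : n.choose 2 - (edgeCount H + T.card) = Hᶜ.edgeFinset.card - T.card := by omega
    rw [h1, h2, pow_add]
    ring
  rw [Finset.sum_congr rfl hterm,
    ← ENNReal.ofReal_sum_of_nonneg (fun T _ => by positivity), ← Finset.mul_sum,
    sum_powerset_prob, mul_one]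


lemma prEvent_add_compl {α : Type*} (μ : PMF α) (P : α → Prop) :
    prEvent μ P + prEvent μ (fun a => ¬ P a) = 1 := by
  rw [prEvent, prEvent, ← ENNReal.tsum_add, ← PMF.tsum_coe μ]
  congr 1
  funext a
  by_cases h : P a <;> simp [h]

lemma prEvent_le_sum {α : Type*} [Fintype α] (μ : PMF α) (Q : α → Prop) {ι : Type*}
    (A : Finset ι) (R : ι → α → Prop)
    (h : ∀ a, μ a ≠ 0 → Q a → ∃ i ∈ A, R i a) :
    prEvent μ Q ≤ ∑ i ∈ A, prEvent μ (R i) := by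
  rw [prEvent, tsum_fintype]
  have hR : ∀ i ∈ A, prEvent μ (R i) = ∑ a : α, if R i a then μ a else 0 := fun i _ => by
    rw [prEvent, tsum_fintype]
  rw [Finset.sum_congr rfl hR, Finset.sum_comm]
  apply Finset.sum_le_sum
  intro a _
  by_cases hQ : Q a
  · by_cases hμ : μ a = 0
    · simp [hμ]
    · obtain ⟨i, hiA, hiR⟩ := h a hμ hQ
      rw [if_pos hQ]
      have h2 := Finset.single_le_sum (f := fun j => if R j a then μ a else 0)
        (fun j _ => zero_le) hiA
      simpa only [if_pos hiR] using h2
  · simp [hQ]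

lemma prEvent_atom (ν : PMF (SimpleGraph (Fin n) × SimpleGraph (Fin n))) {d : ℕ} {p : ℝ}
    (hν : IsRegAddGnp ν d p) (hp0 : 0 ≤ p) (hp1 : p ≤ 1)
    (K₀ : SimpleGraph (Fin n)) (hreg : IsRegularGraph K₀ d)
    (S : Finset (Sym2 (Fin n))) (hdiag : ∀ e ∈ S, ¬ e.IsDiag)
    (hdisj : ∀ e ∈ S, e ∉ K₀.edgeSet) :
    prEvent ν (fun w => w.1 = K₀ ∧ (S : Set (Sym2 (Fin n))) ⊆ w.2.edgeSet)
      = ({G : SimpleGraph (Fin n) | IsRegularGraph G d}.ncard : ℝ≥0∞)⁻¹ *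
        ENNReal.ofReal (p ^ S.card) := by
  classical
  set H := K₀ ⊔ SimpleGraph.fromEdgeSet (S : Set (Sym2 (Fin n))) with hHdef
  have hEH : H.edgeSet = K₀.edgeSet ∪ (S : Set (Sym2 (Fin n))) := by
    rw [hHdef, SimpleGraph.edgeSet_sup, SimpleGraph.edgeSet_fromEdgeSet]
    congr 1
    ext e
    constructor
    · exact fun h => h.1
    · exact fun h => ⟨h, fun hd => hdiag e h hd⟩
  have hHcount : edgeCount H = edgeCount K₀ + S.card := by
    rw [edgeCount, hEH, Set.ncard_union_eq ?dd (Set.toFinite _) (Set.toFinite _)]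
    · rw [Set.ncard_coe_finset]
      rfl
    case dd =>
      rw [Set.disjoint_left]
      intro e he heS
      exact hdisj e heS he
  have hiff : ∀ F : SimpleGraph (Fin n),
      ((S : Set (Sym2 (Fin n))) ⊆ F.edgeSet ∧ K₀ ≤ F) ↔ H ≤ F := by
    intro F
    rw [← SimpleGraph.edgeSet_subset_edgeSet (G₁ := H), hEH]
    constructor
    · rintro ⟨h1, h2⟩
      exact Set.union_subset (SimpleGraph.edgeSet_mono h2) h1
    · intro h
      constructor
      · exact fun e he => h (Set.mem_union_right _ he)
      · rw [← SimpleGraph.edgeSet_subset_edgeSet]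
        exact fun e he => h (Set.mem_union_left _ he)
  rw [prEvent, tsum_fintype, Fintype.sum_prod_type]
  rw [Finset.sum_comm]
  dsimp only
  have hcollapse : ∀ F : SimpleGraph (Fin n),
      (∑ K' : SimpleGraph (Fin n), @ite _ (K' = K₀ ∧ (S : Set (Sym2 (Fin n))) ⊆ F.edgeSet)
        (Classical.propDecidable _) (ν (K', F)) 0)
      = (if (S : Set (Sym2 (Fin n))) ⊆ F.edgeSet then ν (K₀, F) else 0) := by
    intro F
    by_cases hc : (S : Set (Sym2 (Fin n))) ⊆ F.edgeSet
    · simp only [hc, and_true, if_pos]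
      rw [Finset.sum_ite_eq' Finset.univ K₀ (fun K' => ν (K', F))]
      simp
    · simp [hc]
  refine Eq.trans (Finset.sum_congr rfl (fun F _ => hcollapse F)) ?_
  have hcongr : ∀ F : SimpleGraph (Fin n),
      (if (S : Set (Sym2 (Fin n))) ⊆ F.edgeSet then ν (K₀, F) else 0)
      = ({G : SimpleGraph (Fin n) | IsRegularGraph G d}.ncard : ℝ≥0∞)⁻¹ *
        (if H ≤ F then ENNReal.ofReal (p ^ (edgeCount F - edgeCount K₀) *
          (1 - p) ^ (n.choose 2 - edgeCount F)) else 0) := by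
    intro F
    rw [hν (K₀, F)]
    by_cases hHF : H ≤ F
    · have h12 := (hiff F).2 hHF
      rw [if_pos h12.1, if_pos ⟨hreg, h12.2⟩, if_pos hHF]
    · have h12 : ¬ ((S : Set (Sym2 (Fin n))) ⊆ F.edgeSet ∧ K₀ ≤ F) := fun h => hHF ((hiff F).1 h)
      rw [if_neg hHF, mul_zero]
      by_cases h1 : (S : Set (Sym2 (Fin n))) ⊆ F.edgeSet
      · rw [if_pos h1, if_neg (fun h => h12 ⟨h1, h.2⟩)]
      · rw [if_neg h1]
  refine Eq.trans (Finset.sum_congr rfl (fun F _ => hcongr F)) ?_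
  rw [← Finset.mul_sum, sum_over_ext K₀ H le_sup_left hp0 hp1]
  have hx : edgeCount H - edgeCount K₀ = S.card := by omega
  rw [hx]

lemma aux_one_add_inv_pow (k : ℕ) (hk : 1 ≤ k) : (1 + 1/(k:ℝ))^k ≤ Real.exp 1 := by
  have hkR : (0:ℝ) < k := by exact_mod_cast hk
  have h := Real.add_one_le_exp (1/(k:ℝ))
  have h0 : (0:ℝ) ≤ 1 + 1/k := by positivity
  calc (1 + 1/(k:ℝ))^k ≤ (Real.exp (1/k))^k := by
        apply pow_le_pow_left₀ h0 (by linarith)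
    _ = Real.exp ((k:ℝ) * (1/k)) := by rw [Real.exp_nat_mul]
    _ = Real.exp 1 := by rw [mul_one_div, div_self (ne_of_gt hkR)]

lemma pow_self_le_factorial_mul_exp (k : ℕ) :
    (k:ℝ)^k ≤ (k.factorial : ℝ) * Real.exp 1 ^ k := by
  induction k with
  | zero => simp
  | succ k ih =>
    have e1 : (1:ℝ) ≤ Real.exp 1 := by
      have := Real.exp_one_gt_d9; linarith
    rcases Nat.eq_zero_or_pos k with hk | hk
    · subst hk; simpa using e1
    have hkR : (0:ℝ) < k := by exact_mod_cast hk
    have hsplit : ((k:ℝ)+1)^k = (k:ℝ)^k * (1+1/(k:ℝ))^k := by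
      rw [← mul_pow]
      congr 1
      field_simp
    calc ((k+1:ℕ):ℝ)^(k+1) = ((k:ℝ)+1) * ((k:ℝ)+1)^k := by push_cast; ring
      _ ≤ ((k:ℝ)+1) * ((k:ℝ)^k * Real.exp 1) := by
          apply mul_le_mul_of_nonneg_left _ (by linarith)
          rw [hsplit]
          exact mul_le_mul_of_nonneg_left (aux_one_add_inv_pow k hk) (by positivity)
      _ ≤ ((k:ℝ)+1) * (((k.factorial:ℝ) * Real.exp 1 ^ k) * Real.exp 1) := by
          apply mul_le_mul_of_nonneg_left _ (by linarith)
          exact mul_le_mul_of_nonneg_right ih (by positivity)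
      _ = ((k+1).factorial : ℝ) * Real.exp 1 ^ (k+1) := by
          rw [Nat.factorial_succ]; push_cast; ring

lemma choose_mul_pow_le {N k : ℕ} (hk : 1 ≤ k) {p : ℝ} (hp : 0 ≤ p) :
    (N.choose k : ℝ) * p ^ k ≤ ((N:ℝ) * Real.exp 1 * p / k) ^ k := by
  have hkR : (0:ℝ) < k := by exact_mod_cast hk
  have hfac : (0:ℝ) < k.factorial := by exact_mod_cast k.factorial_pos
  have h1 : (N.choose k : ℝ) ≤ (N:ℝ)^k / (k.factorial : ℝ) := by
    have := Nat.choose_le_pow_div (α := ℝ) k N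
    simpa using this
  have h2 : (N:ℝ)^k / (k.factorial : ℝ) ≤ (N:ℝ)^k * Real.exp 1 ^ k / (k:ℝ)^k := by
    rw [div_le_div_iff₀ hfac (by positivity)]
    have := pow_self_le_factorial_mul_exp k
    have hN : (0:ℝ) ≤ (N:ℝ)^k := by positivity
    nlinarith [pow_nonneg (le_of_lt hkR) k]
  calc (N.choose k:ℝ) * p^k ≤ ((N:ℝ)^k * Real.exp 1^k / (k:ℝ)^k) * p^k :=
        mul_le_mul_of_nonneg_right (h1.trans h2) (pow_nonneg hp k)
    _ = ((N:ℝ) * Real.exp 1 * p / k)^k := by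
        rw [div_pow, mul_pow, mul_pow]
        ring

lemma geom_half_le (M : ℕ) : ∑ u ∈ Finset.range M, ((1:ℝ)/2)^u ≤ 2 := by
  rw [geom_sum_eq (by norm_num : (1/2:ℝ) ≠ 1) M]
  have h : (0:ℝ) ≤ (1/2:ℝ)^M := by positivity
  have h2 : ((1/2:ℝ)^M - 1) / ((1/2:ℝ) - 1) = 2 * (1 - (1/2:ℝ)^M) := by ring
  rw [h2]
  linarith

lemma card_triple_le {α β γ : Type*} [DecidableEq α] [DecidableEq β] [DecidableEq γ]
    (T : Finset (α × β × γ)) (C1 : Finset α) (C2 : α → Finset β) (C3 : β → Finset γ)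
    (h : ∀ t ∈ T, t.1 ∈ C1 ∧ t.2.1 ∈ C2 t.1 ∧ t.2.2 ∈ C3 t.2.1) (c2 c3 : ℕ)
    (h2 : ∀ a ∈ C1, (C2 a).card ≤ c2) (h3 : ∀ a ∈ C1, ∀ b ∈ C2 a, (C3 b).card ≤ c3) :
    T.card ≤ C1.card * (c2 * c3) := by
  have hsub : T ⊆ C1.biUnion (fun a => (C2 a).biUnion
      (fun b => (C3 b).image (fun c => (a, b, c)))) := by
    intro t ht
    obtain ⟨h1, h2', h3'⟩ := h t ht
    rw [Finset.mem_biUnion]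
    exact ⟨t.1, h1, by
      rw [Finset.mem_biUnion]
      exact ⟨t.2.1, h2', by
        rw [Finset.mem_image]
        exact ⟨t.2.2, h3', rfl⟩⟩⟩
  calc T.card ≤ _ := Finset.card_le_card hsub
    _ ≤ ∑ a ∈ C1, ((C2 a).biUnion (fun b => (C3 b).image (fun c => (a, b, c)))).card :=
        Finset.card_biUnion_le
    _ ≤ ∑ _a ∈ C1, (c2 * c3) := by
        apply Finset.sum_le_sum
        intro a ha
        calc ((C2 a).biUnion (fun b => (C3 b).image (fun c => (a, b, c)))).card
            ≤ ∑ b ∈ C2 a, ((C3 b).image (fun c => (a, b, c))).card := Finset.card_biUnion_le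
          _ ≤ ∑ _b ∈ C2 a, c3 := by
              apply Finset.sum_le_sum
              intro b hb
              exact (Finset.card_image_le).trans (h3 a ha b hb)
          _ = (C2 a).card * c3 := by rw [Finset.sum_const, smul_eq_mul]
          _ ≤ c2 * c3 := Nat.mul_le_mul_right c3 (h2 a ha)
    _ = C1.card * (c2 * c3) := by rw [Finset.sum_const, smul_eq_mul]

lemma card_small_sets (hn : 1 ≤ n) (s : ℕ) :
    ((Finset.univ : Finset (Finset (Fin n))).filter (fun U => U.card ≤ s)).card
      ≤ (s+1) * n^s := by
  have hsub : (Finset.univ : Finset (Finset (Fin n))).filter (fun U => U.card ≤ s)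
      ⊆ (Finset.range (s+1)).biUnion (fun j => Finset.powersetCard j Finset.univ) := by
    intro U hU
    rw [Finset.mem_filter] at hU
    rw [Finset.mem_biUnion]
    refine ⟨U.card, by rw [Finset.mem_range]; omega, ?_⟩
    rw [Finset.mem_powersetCard]
    exact ⟨Finset.subset_univ U, rfl⟩
  calc _ ≤ _ := Finset.card_le_card hsub
    _ ≤ ∑ j ∈ Finset.range (s+1), (Finset.powersetCard j (Finset.univ : Finset (Fin n))).card :=
        Finset.card_biUnion_le
    _ ≤ ∑ _j ∈ Finset.range (s+1), n^s := by
        apply Finset.sum_le_sum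
        intro j hj
        rw [Finset.mem_range] at hj
        rw [Finset.card_powersetCard, Finset.card_univ, Fintype.card_fin]
        calc n.choose j ≤ n^j := Nat.choose_le_pow n j
          _ ≤ n^s := Nat.pow_le_pow_right hn (by omega)
    _ = (s+1) * n^s := by rw [Finset.sum_const, Finset.card_range, smul_eq_mul]

lemma deg_eq_degree (G : SimpleGraph (Fin n)) (v : Fin n) : deg G v = G.degree v := by
  rw [deg, Nat.card_eq_fintype_card, SimpleGraph.degree, SimpleGraph.neighborFinset,
    Set.toFinset_card]

lemma edgesWithin_empty (G : SimpleGraph (Fin n)) : edgesWithin G (∅ : Set (Fin n)) = 0 := by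
  rw [edgesWithin]
  convert Set.ncard_empty (Sym2 (Fin n))
  ext e
  simp only [Set.mem_setOf_eq, Set.mem_empty_iff_false, iff_false, not_and]
  intro he hall
  induction e with
  | _ a b => exact hall a (Sym2.mem_mk_left a b)

lemma hD_aux {x dd : ℝ} (hx : (10:ℝ)^6 ≤ x) (hdd : dd ≤ x / 2000) :
    x^2/4 ≤ x*(x-1)/2 - dd*x/2 := by nlinarith

lemma h4m_aux {x y : ℝ} (hx : (10:ℝ)^6 ≤ x) (hy : 0 < y) (h : y^2 ≤ x^3) : 4*y ≤ x^2 := by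
  nlinarith [sq_nonneg (x^2 - 4*y), sq_nonneg x, sq_nonneg (x-16)]

lemma card_nbhd_le {d : ℕ} (K : SimpleGraph (Fin n)) (hreg : IsRegularGraph K d)
    (U' : Finset (Fin n)) :
    ((Finset.univ : Finset (Fin n)).filter (fun v => v ∈ nbhd K ↑U')).card ≤ d * U'.card := by
  classical
  have hsub : (Finset.univ : Finset (Fin n)).filter (fun v => v ∈ nbhd K ↑U')
      ⊆ U'.biUnion (fun x => K.neighborFinset x) := by
    intro v hv
    rw [Finset.mem_filter] at hv
    obtain ⟨-, hnb⟩ := hv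
    obtain ⟨u, huU, hadj⟩ := hnb.2
    rw [Finset.mem_biUnion]
    exact ⟨u, by exact_mod_cast huU, by rwa [SimpleGraph.mem_neighborFinset]⟩
  calc _ ≤ _ := Finset.card_le_card hsub
    _ ≤ ∑ x ∈ U', (K.neighborFinset x).card := Finset.card_biUnion_le
    _ = ∑ _x ∈ U', d := by
        apply Finset.sum_congr rfl
        intro x _
        rw [← SimpleGraph.degree, ← deg_eq_degree, hreg x]
    _ = U'.card * d := by rw [Finset.sum_const, smul_eq_mul]
    _ = d * U'.card := Nat.mul_comm _ _

def AdmPred (n d : ℕ) (lam δ : ℝ)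
    (i : SimpleGraph (Fin n) × Finset (Fin n) × Finset (Fin n) × Finset (Sym2 (Fin n))) :
    Prop :=
  IsRegularGraph i.1 d ∧ d ≤ 4 * i.2.2.1.card ∧
    ((i.2.2.1.card : ℝ) ≤ lam * n / (100 * δ * Real.log n)) ∧
    ((i.2.1.card : ℝ) * d ≤ 4 * i.2.2.1.card) ∧
    ((i.2.2.1 : Set (Fin n)) ⊆ ↑i.2.1 ∪ nbhd i.1 ↑i.2.1) ∧
    i.2.2.2 ⊆ i.2.2.1.sym2 ∧
    i.2.2.2.card = 50 * i.2.2.1.card ∧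
    (∀ e ∈ i.2.2.2, ¬ e.IsDiag) ∧
    (∀ e ∈ i.2.2.2, e ∉ i.1.edgeSet)

lemma aux_lam_div {lam L : ℝ} (h1 : lam ≤ 1/2) (hL : 0 < L) : lam/(50*L) ≤ 1/(100*L) := by
  rw [div_le_div_iff₀ (by positivity) (by positivity)]
  nlinarith [mul_le_mul_of_nonneg_right h1 hL.le]

lemma aux_five_div {L : ℝ} (hL : 0 < L) : 5*(1/(100*L)) ≤ 1/(15*L) := by
  rw [show (5:ℝ)*(1/(100*L)) = 1/(20*L) by field_simp; ring]
  exact one_div_le_one_div_of_le (by linarith) (by linarith)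

lemma aux_u_log {u l : ℝ} (hu : 0 ≤ u) (hl : 0.69 ≤ l) : 8*u*(1/100) ≤ u*l := by
  nlinarith

set_option maxHeartbeats 1600000 in
lemma inner_real_bound {n : ℕ} {c lam δ p : ℝ} {d m : ℕ}
    (hc : 0 < c) (hcn : 2 / c ≤ n) (hL : 13 ≤ Real.log n)
    (hlam0 : 0 < lam) (hlam2 : lam ≤ 1/2)
    (hd : 100 * Real.log n ≤ (d:ℝ))
    (hm1 : 1 ≤ m) (hδ : δ = 2 * m / n)
    (hp0 : 0 ≤ p) (hp4 : p ≤ 4 * m / (n:ℝ)^2)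
    (K₀ : SimpleGraph (Fin n)) (hreg : IsRegularGraph K₀ d) :
    ∑ t : Finset (Fin n) × Finset (Fin n) × Finset (Sym2 (Fin n)),
      (if AdmPred n d lam δ (K₀, t) then p ^ t.2.2.card else 0) ≤ c / (n:ℝ)^14 := by
  classical
  have hLpos : (0:ℝ) < Real.log n := by linarith
  have hd1300 : (1300:ℝ) ≤ (d:ℝ) := by linarith
  have hd1300N : 1300 ≤ d := by exact_mod_cast hd1300
  have hd0 : 0 < d := by omega
  have hd0R : (0:ℝ) < d := by exact_mod_cast hd0
  have hn2 : 2 ≤ n := by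
    by_contra h
    push_neg at h
    have h0 : (n:ℝ) ≤ 1 := by
      have : n ≤ 1 := by omega
      exact_mod_cast this
    have := Real.log_nonpos (by positivity) h0
    linarith
  have hn1R : (1:ℝ) ≤ n := by
    have : (2:ℝ) ≤ n := by exact_mod_cast hn2
    linarith
  have hn0R : (0:ℝ) < n := by linarith
  have hmR : (1:ℝ) ≤ m := by exact_mod_cast hm1
  have hmpos : (0:ℝ) < m := by linarith
  have hδpos : 0 < δ := by rw [hδ]; positivity
  have he3 : Real.exp 1 ≤ 3 := by
    have := Real.exp_one_lt_d9
    linarith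
  rw [← Finset.sum_filter]
  set B := Finset.univ.filter
    (fun t : Finset (Fin n) × Finset (Fin n) × Finset (Sym2 (Fin n)) =>
      AdmPred n d lam δ (K₀, t)) with hB
  have hmaps : ∀ t ∈ B, t.2.1.card ∈ Finset.range (n+1) := by
    intro t _
    rw [Finset.mem_range]
    have h1 := Finset.card_le_univ t.2.1
    simp only [Finset.card_univ, Fintype.card_fin] at h1
    omega
  rw [← Finset.sum_fiberwise_of_maps_to hmaps (fun t => p ^ t.2.2.card)]
  have hgeom : ∀ u ∈ Finset.range (n+1),
      (∑ t ∈ B.filter (fun t => t.2.1.card = u), p ^ t.2.2.card)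
        ≤ (1/(n:ℝ)^1000) * (1/2)^u := by
    intro u hur
    rw [Finset.mem_range] at hur
    rcases Finset.eq_empty_or_nonempty (B.filter (fun t => t.2.1.card = u)) with he | hne
    · rw [he, Finset.sum_empty]
      positivity
    · obtain ⟨t₀, ht₀⟩ := hne
      rw [Finset.mem_filter, hB, Finset.mem_filter] at ht₀
      obtain ⟨⟨-, hAdm₀⟩, hu₀⟩ := ht₀
      obtain ⟨-, hd4u₀, husize₀, -⟩ := hAdm₀
      rw [hu₀] at hd4u₀ husize₀
      have hu1 : 1 ≤ u := by omega
      have hu0R : (0:ℝ) < u := by exact_mod_cast hu1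
      -- counting
      set smax := 4*u/d with hsmax
      set W : Finset (Fin n) → Finset (Fin n) :=
        fun U' => U' ∪ Finset.univ.filter (fun v => v ∈ nbhd K₀ ↑U') with hWdef
      have hWcard : ∀ U' : Finset (Fin n), U'.card ≤ smax → (W U').card ≤ 8*u := by
        intro U' hU'
        have h2 : smax * d ≤ 4*u := Nat.div_mul_le_self _ _
        have h3 : smax ≤ 4*u := Nat.div_le_self _ _
        calc (W U').card
            ≤ U'.card + ((Finset.univ : Finset (Fin n)).filter
                (fun v => v ∈ nbhd K₀ ↑U')).card := Finset.card_union_le _ _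
          _ ≤ U'.card + d * U'.card := Nat.add_le_add_left (card_nbhd_le K₀ hreg U') _
          _ ≤ smax + d * smax := Nat.add_le_add hU' (Nat.mul_le_mul_left d hU')
          _ = smax + smax * d := by rw [Nat.mul_comm]
          _ ≤ 4*u + 4*u := Nat.add_le_add h3 h2
          _ = 8*u := by omega
      have hcount : (B.filter (fun t => t.2.1.card = u)).card
          ≤ ((smax+1) * n^smax) * (2^(8*u) * ((81*u*u).choose (50*u))) := by
        have h1 := card_triple_le (B.filter (fun t => t.2.1.card = u))
          (Finset.univ.filter (fun U' : Finset (Fin n) => U'.card ≤ smax))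
          (fun U' => (W U').powerset)
          (fun U => (U.sym2).powersetCard (50*u))
          (by
            intro t ht
            rw [Finset.mem_filter, hB, Finset.mem_filter] at ht
            obtain ⟨⟨-, hAdm⟩, hu⟩ := ht
            obtain ⟨-, -, -, hA4, hA5, hA6, hA7, -⟩ := hAdm
            refine ⟨?_, ?_, ?_⟩
            · rw [Finset.mem_filter]
              refine ⟨Finset.mem_univ _, ?_⟩
              have hnat : t.1.card * d ≤ 4 * u := by
                have hcast : ((t.1.card * d : ℕ) : ℝ) ≤ ((4*u : ℕ) : ℝ) := by
                  push_cast
                  rw [← hu]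
                  exact hA4
                exact_mod_cast hcast
              rw [hsmax, Nat.le_div_iff_mul_le hd0]
              exact hnat
            · rw [Finset.mem_powerset]
              intro v hv
              have := hA5 (by exact_mod_cast hv : (v : Fin n) ∈ (t.2.1 : Set (Fin n)))
              rw [hWdef]
              rcases this with h | h
              · exact Finset.mem_union_left _ (by exact_mod_cast h)
              · exact Finset.mem_union_right _ (by
                  rw [Finset.mem_filter]
                  exact ⟨Finset.mem_univ _, h⟩)
            · rw [Finset.mem_powersetCard]
              exact ⟨hA6, by rw [hA7, hu]⟩)
          (2^(8*u)) ((81*u*u).choose (50*u))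
          (by
            intro U' hU'
            rw [Finset.mem_filter] at hU'
            rw [Finset.card_powerset]
            exact Nat.pow_le_pow_right (by norm_num) (hWcard U' hU'.2))
          (by
            intro U' hU' U hU
            rw [Finset.mem_filter] at hU'
            rw [Finset.mem_powerset] at hU
            rw [Finset.card_powersetCard]
            apply Nat.choose_le_choose
            have hUc : U.card ≤ 8*u := (Finset.card_le_card hU).trans (hWcard U' hU'.2)
            rw [Finset.card_sym2]
            calc (U.card+1).choose 2 ≤ (8*u+1).choose 2 := Nat.choose_le_choose 2 (by omega)
              _ ≤ (8*u+1)^2 := Nat.choose_le_pow _ _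
              _ ≤ (9*u)^2 := Nat.pow_le_pow_left (by omega) 2
              _ = 81*u*u := by ring)
        refine h1.trans ?_
        exact Nat.mul_le_mul_right _ (card_small_sets (by omega) smax)
      -- fiber sum = card * p^(50u)
      have hsum_card : (∑ t ∈ B.filter (fun t => t.2.1.card = u), p ^ t.2.2.card)
          = ((B.filter (fun t => t.2.1.card = u)).card : ℝ) * p ^ (50*u) := by
        have hconst : ∀ t ∈ B.filter (fun t => t.2.1.card = u),
            p ^ t.2.2.card = p ^ (50*u) := by
          intro t ht
          rw [Finset.mem_filter, hB, Finset.mem_filter] at ht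
          obtain ⟨⟨-, hAdm⟩, hu⟩ := ht
          rw [hAdm.2.2.2.2.2.2.1, hu]
        rw [Finset.sum_congr rfl hconst, Finset.sum_const, nsmul_eq_mul]
      -- analytic bounds
      have hsmax1 : 1 ≤ smax := by
        rw [hsmax, Nat.le_div_iff_mul_le hd0]
        omega
      have hsmaxn : smax + 1 ≤ n := by
        have h1 : smax * d ≤ 4*u := Nat.div_mul_le_self _ _
        have h2 : smax * 1300 ≤ smax * d := Nat.mul_le_mul_left smax hd1300N
        have h3 : smax * 1300 ≤ 4*u := le_trans h2 h1
        omega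
      have hsmaxR : (smax:ℝ) ≤ 4*u/(d:ℝ) := by
        rw [hsmax]
        have := Nat.cast_div_le (m := 4*u) (n := d) (α := ℝ)
        push_cast at this ⊢
        exact this
      have h_a : ((smax:ℝ)+1) * (n:ℝ)^smax ≤ 2^u := by
        have e1 : ((smax:ℝ)+1) * (n:ℝ)^smax ≤ (n:ℝ)^(smax+1) := by
          rw [pow_succ, mul_comm ((n:ℝ)^smax) (n:ℝ)]
          apply mul_le_mul_of_nonneg_right ?_ (by positivity)
          exact_mod_cast hsmaxn
        have e2 : (n:ℝ)^(smax+1) = Real.exp (((smax+1:ℕ):ℝ) * Real.log n) := by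
          conv_lhs => rw [← Real.exp_log hn0R]
          rw [← Real.exp_nat_mul]
        have f3 : (1:ℝ) ≤ 4*u/(d:ℝ) := by
          rw [le_div_iff₀ hd0R, one_mul]
          exact_mod_cast hd4u₀
        have e3 : ((smax+1:ℕ):ℝ) * Real.log n ≤ (u:ℝ) * Real.log 2 := by
          have f1 : ((smax+1:ℕ):ℝ) ≤ 8*(u:ℝ)/(d:ℝ) := by
            push_cast
            have : 8*(u:ℝ)/(d:ℝ) = 4*u/(d:ℝ) + 4*u/(d:ℝ) := by ring
            rw [this]
            linarith
          have f4 : ((smax+1:ℕ):ℝ) * Real.log n ≤ (8*(u:ℝ)/(d:ℝ)) * Real.log n :=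
            mul_le_mul_of_nonneg_right f1 hLpos.le
          have f5 : (8*(u:ℝ)/(d:ℝ)) * Real.log n = 8*(u:ℝ)*(Real.log n/(d:ℝ)) := by ring
          have f6 : Real.log n / (d:ℝ) ≤ 1/100 := by
            rw [div_le_div_iff₀ hd0R (by norm_num)]
            linarith
          have f7 : 8*(u:ℝ)*(Real.log n/(d:ℝ)) ≤ 8*(u:ℝ)*(1/100) :=
            mul_le_mul_of_nonneg_left f6 (by positivity)
          have f8 : 8*(u:ℝ)*(1/100) ≤ (u:ℝ) * Real.log 2 := by
            have := Real.log_two_gt_d9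
            exact aux_u_log (by positivity) (by norm_num; linarith)
          calc ((smax+1:ℕ):ℝ) * Real.log n ≤ (8*(u:ℝ)/(d:ℝ)) * Real.log n := f4
            _ = 8*(u:ℝ)*(Real.log n/(d:ℝ)) := f5
            _ ≤ 8*(u:ℝ)*(1/100) := f7
            _ ≤ (u:ℝ) * Real.log 2 := f8
        calc ((smax:ℝ)+1) * (n:ℝ)^smax ≤ (n:ℝ)^(smax+1) := e1
          _ = Real.exp (((smax+1:ℕ):ℝ) * Real.log n) := e2
          _ ≤ Real.exp ((u:ℝ) * Real.log 2) := Real.exp_le_exp.2 e3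
          _ = 2^u := by
              rw [Real.exp_nat_mul, Real.exp_log (by norm_num : (0:ℝ) < 2)]
      have hup : (u:ℝ) * p ≤ 1/(100*Real.log n) := by
        have g1 : (0:ℝ) ≤ lam * n / (100 * δ * Real.log n) := by positivity
        have g2 : (u:ℝ) * p ≤ (lam * n / (100 * δ * Real.log n)) * (4 * m / (n:ℝ)^2) :=
          mul_le_mul husize₀ hp4 hp0 g1
        have g3 : (lam * (n:ℝ) / (100 * (2*(m:ℝ)/(n:ℝ)) * Real.log n)) * (4 * (m:ℝ) / (n:ℝ)^2)
            = lam/(50*Real.log n) := by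
          field_simp
          ring
        rw [hδ] at g2
        rw [g3] at g2
        exact g2.trans (aux_lam_div hlam2 hLpos)
      have hbase : ((81*u*u : ℕ):ℝ) * Real.exp 1 * p / ((50*u : ℕ):ℝ)
          ≤ 1/(15*Real.log n) := by
        have b1 : ((81*u*u : ℕ):ℝ) * Real.exp 1 * p / ((50*u : ℕ):ℝ)
            = (81 * Real.exp 1/50) * ((u:ℝ) * p) := by
          push_cast
          field_simp
        rw [b1]
        have b2 : (81 * Real.exp 1/50) * ((u:ℝ) * p) ≤ 5 * (1/(100*Real.log n)) := by
          apply mul_le_mul (by linarith) hup (by positivity) (by norm_num)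
        exact b2.trans (aux_five_div hLpos)
      have h_c : (((81*u*u).choose (50*u) : ℕ):ℝ) * p^(50*u) ≤ (1/(15*Real.log n))^(50*u) := by
        refine (choose_mul_pow_le (by omega : 1 ≤ 50*u) hp0).trans ?_
        exact pow_le_pow_left₀ (by positivity) hbase _
      -- key exponential comparison
      have hu25L : 1000 * Real.log n ≤ 40 * (u:ℝ) := by
        have h1 : (d:ℝ) ≤ 4*u := by exact_mod_cast hd4u₀
        linarith
      have hX2 : (2:ℝ) ≤ 15*Real.log n := by linarith
      have hXe : Real.exp 1 ≤ 15*Real.log n := by linarith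
      have hkey : (2:ℝ)^(10*u) * (n:ℝ)^1000 ≤ (15*Real.log n)^(50*u) := by
        have k1 : (15*Real.log n)^(50*u) = (15*Real.log n)^(10*u) * (15*Real.log n)^(40*u) := by
          rw [← pow_add]
          congr 1
          omega
        have k2 : (2:ℝ)^(10*u) ≤ (15*Real.log n)^(10*u) :=
          pow_le_pow_left₀ (by norm_num) hX2 _
        have k3 : (n:ℝ)^1000 ≤ (15*Real.log n)^(40*u) := by
          have k4 : (n:ℝ)^1000 = Real.exp (1000 * Real.log n) := by
            conv_lhs => rw [← Real.exp_log hn0R]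
            rw [← Real.exp_nat_mul]
            norm_num
          have k5 : Real.exp (1000*Real.log n) ≤ Real.exp (40*(u:ℝ)) := Real.exp_le_exp.2 hu25L
          have k6 : Real.exp (40*(u:ℝ)) = Real.exp 1 ^ (40*u) := by
            rw [← Real.exp_nat_mul, mul_one]
            congr 1
            push_cast
            ring
          have k7 : Real.exp 1 ^ (40*u) ≤ (15*Real.log n)^(40*u) :=
            pow_le_pow_left₀ (Real.exp_pos 1).le hXe _
          rw [k4]
          calc Real.exp (1000*Real.log n) ≤ Real.exp (40*(u:ℝ)) := k5
            _ = Real.exp 1 ^ (40*u) := k6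
            _ ≤ (15*Real.log n)^(40*u) := k7
        rw [k1]
        exact mul_le_mul k2 k3 (by positivity) (by positivity)
      have hfinal : (2:ℝ)^u * 2^(8*u) * (1/(15*Real.log n))^(50*u)
          ≤ (1/(n:ℝ)^1000) * (1/2)^u := by
        have w1 : ((1:ℝ)/(15*Real.log n))^(50*u) = 1/(15*Real.log n)^(50*u) := by
          rw [div_pow, one_pow]
        have w2 : ((1:ℝ)/2)^u = 1/(2:ℝ)^u := by rw [div_pow, one_pow]
        have w3 : (1/(n:ℝ)^1000) * (1/(2:ℝ)^u) = 1/((n:ℝ)^1000 * 2^u) := by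
          rw [div_mul_div_comm, one_mul]
        rw [w1, w2, w3, mul_one_div, div_le_div_iff₀ (by positivity) (by positivity), one_mul]
        have w4 : (2:ℝ)^u * 2^(8*u) * ((n:ℝ)^1000 * 2^u)
            = 2^(10*u) * (n:ℝ)^1000 := by
          have w5 : (2:ℝ)^u * 2^(8*u) * ((n:ℝ)^1000 * 2^u)
              = ((2:ℝ)^u * 2^(8*u) * 2^u) * (n:ℝ)^1000 := by ring
          rw [w5, ← pow_add, ← pow_add]
          congr 2
          omega
        rw [w4]
        exact hkey
      -- assemble
      rw [hsum_card]
      have hC : ((B.filter (fun t => t.2.1.card = u)).card : ℝ) * p^(50*u)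
          ≤ (((smax+1) * n^smax : ℕ):ℝ) * ((2^(8*u) : ℕ):ℝ)
            * ((((81*u*u).choose (50*u) : ℕ):ℝ) * p^(50*u)) := by
        have hcastle : ((B.filter (fun t => t.2.1.card = u)).card : ℝ)
            ≤ (((smax+1) * n^smax) * (2^(8*u) * ((81*u*u).choose (50*u))) : ℕ) := by
          exact_mod_cast hcount
        calc ((B.filter (fun t => t.2.1.card = u)).card : ℝ) * p^(50*u)
            ≤ ((((smax+1) * n^smax) * (2^(8*u) * ((81*u*u).choose (50*u))) : ℕ):ℝ) * p^(50*u) :=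
              mul_le_mul_of_nonneg_right hcastle (by positivity)
          _ = _ := by push_cast; ring
      refine hC.trans ?_
      have hstep : (((smax+1) * n^smax : ℕ):ℝ) * ((2^(8*u) : ℕ):ℝ)
            * ((((81*u*u).choose (50*u) : ℕ):ℝ) * p^(50*u))
          ≤ (2:ℝ)^u * 2^(8*u) * (1/(15*Real.log n))^(50*u) := by
        apply mul_le_mul ?_ h_c (by positivity) (by positivity)
        apply mul_le_mul ?_ ?_ (by positivity) (by positivity)
        · push_cast
          exact h_a
        · push_cast
          exact le_rfl
      exact hstep.trans hfinal
  refine (Finset.sum_le_sum hgeom).trans ?_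
  rw [← Finset.mul_sum]
  have hg2 := geom_half_le (n+1)
  have hfin : (1/(n:ℝ)^1000) * (∑ u ∈ Finset.range (n+1), ((1:ℝ)/2)^u) ≤ (1/(n:ℝ)^1000) * 2 :=
    mul_le_mul_of_nonneg_left hg2 (by positivity)
  refine hfin.trans ?_
  have heq : (1/(n:ℝ)^1000) * 2 = 2/(n:ℝ)^1000 := by ring
  rw [heq, div_le_div_iff₀ (by positivity) (by positivity)]
  have q1 : (n:ℝ)^1000 = (n:ℝ)^986 * (n:ℝ)^14 := by rw [← pow_add]
  have q3 : (n:ℝ) ≤ (n:ℝ)^986 := le_self_pow₀ hn1R (by norm_num)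
  have q4 : 2/c ≤ (n:ℝ)^986 := le_trans hcn q3
  rw [div_le_iff₀ hc] at q4
  calc (2:ℝ) * (n:ℝ)^14 ≤ ((n:ℝ)^986 * c) * (n:ℝ)^14 :=
        mul_le_mul_of_nonneg_right q4 (by positivity)
    _ = c * (n:ℝ)^1000 := by rw [q1]; ring


lemma bad_prob_bound {n : ℕ} {c lam δ p : ℝ} {d m : ℕ}
    (hc : 0 < c) (hcn : 2 / c ≤ n) (hL : 13 ≤ Real.log n)
    (hlam0 : 0 < lam) (hlam2 : lam ≤ 1/2)
    (hd : 100 * Real.log n ≤ (d:ℝ))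
    (hm1 : 1 ≤ m)
    (hδ : δ = 2 * m / n)
    (hld : 100 * Real.log n ≤ lam * δ)
    (hp0 : 0 ≤ p) (hp1 : p ≤ 1) (hp4 : p ≤ 4 * m / (n:ℝ)^2)
    (ν : PMF (SimpleGraph (Fin n) × SimpleGraph (Fin n))) (hν : IsRegAddGnp ν d p) :
    prEvent ν (fun w => ¬ (∀ U : Set (Fin n),
        (U.ncard : ℝ) ≤ lam * n / (100 * δ * Real.log n) →
        (∃ U' : Set (Fin n), (U'.ncard : ℝ) ≤ 4 * U.ncard / d ∧ U ⊆ U' ∪ nbhd w.1 U') →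
        (edgesWithin (w.2 \ w.1) U : ℝ) ≤ lam / (2 * Real.log n) * δ * U.ncard))
      ≤ ENNReal.ofReal (c / (n:ℝ)^14) := by
  classical
  have hLpos : (0:ℝ) < Real.log n := by linarith
  have hd1300 : (1300:ℝ) ≤ (d:ℝ) := by linarith
  have hd1300N : 1300 ≤ d := by exact_mod_cast hd1300
  have hd0 : 0 < d := by omega
  have hd0R : (0:ℝ) < d := by exact_mod_cast hd0
  set N := ({G : SimpleGraph (Fin n) | IsRegularGraph G d}.ncard) with hN
  set A : Finset (SimpleGraph (Fin n) × Finset (Fin n) × Finset (Fin n) × Finset (Sym2 (Fin n)))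
    := Finset.univ.filter (AdmPred n d lam δ) with hA
  have hdecomp : ∀ w : SimpleGraph (Fin n) × SimpleGraph (Fin n), ν w ≠ 0 →
      (¬ (∀ U : Set (Fin n),
        (U.ncard : ℝ) ≤ lam * n / (100 * δ * Real.log n) →
        (∃ U' : Set (Fin n), (U'.ncard : ℝ) ≤ 4 * U.ncard / d ∧ U ⊆ U' ∪ nbhd w.1 U') →
        (edgesWithin (w.2 \ w.1) U : ℝ) ≤ lam / (2 * Real.log n) * δ * U.ncard)) →
      ∃ i ∈ A, w.1 = i.1 ∧ ((i.2.2.2 : Set (Sym2 (Fin n))) ⊆ w.2.edgeSet) := by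
    intro w hw0 hbadw
    have hwreg : IsRegularGraph w.1 d ∧ w.1 ≤ w.2 := by
      by_contra hcon
      exact hw0 (by rw [hν w, if_neg hcon])
    push_neg at hbadw
    obtain ⟨U, hU1, ⟨U', hU'1, hU'2⟩, hU3⟩ := hbadw
    have hufin : U.Finite := Set.toFinite U
    have hu1 : 1 ≤ U.ncard := by
      by_contra h
      push_neg at h
      have hU0 : U = ∅ := by
        have h0 : U.ncard = 0 := by omega
        rwa [Set.ncard_eq_zero hufin] at h0
      rw [hU0, edgesWithin_empty, Set.ncard_empty] at hU3
      push_cast at hU3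
      simp at hU3
    have hU'1d : 1 ≤ U'.ncard := by
      rcases Set.eq_empty_or_nonempty U' with h | h
      · exfalso
        rw [h] at hU'2
        have hsub : U ⊆ (∅ : Set (Fin n)) := by
          intro v hv
          rcases hU'2 hv with hv' | hv'
          · exact hv'
          · obtain ⟨-, x, hx, -⟩ := hv'
            exact absurd hx (Set.notMem_empty x)
        have hU0 : U = ∅ := Set.subset_empty_iff.1 hsub
        rw [hU0, Set.ncard_empty] at hu1
        omega
      · exact (Set.ncard_pos (Set.toFinite U')).2 h
    have hd4u : d ≤ 4 * U.ncard := by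
      have h1 : (1:ℝ) ≤ 4*(U.ncard:ℝ)/(d:ℝ) := by
        refine le_trans ?_ hU'1
        exact_mod_cast hU'1d
      rw [le_div_iff₀ hd0R, one_mul] at h1
      exact_mod_cast h1
    have hlam50 : (50:ℝ) * U.ncard ≤ lam / (2*Real.log n) * δ * U.ncard := by
      have h1 : (50:ℝ) ≤ lam*δ/(2*Real.log n) := by
        rw [le_div_iff₀ (by positivity)]
        linarith
      have hu0R : (0:ℝ) ≤ U.ncard := Nat.cast_nonneg _
      calc (50:ℝ)*U.ncard ≤ (lam*δ/(2*Real.log n))*U.ncard :=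
            mul_le_mul_of_nonneg_right h1 hu0R
        _ = lam/(2*Real.log n)*δ*U.ncard := by ring
    have heW : 50*U.ncard ≤ edgesWithin (w.2 \ w.1) U := by
      have h1 : ((50*U.ncard : ℕ):ℝ) < (edgesWithin (w.2 \ w.1) U : ℝ) := by
        push_cast
        exact lt_of_le_of_lt hlam50 hU3
      exact_mod_cast h1.le
    set ES : Set (Sym2 (Fin n)) := {e | e ∈ (w.2 \ w.1).edgeSet ∧ ∀ v ∈ e, v ∈ U} with hES
    have hESeq : edgesWithin (w.2 \ w.1) U = ES.ncard := rfl
    have hcard : 50*U.ncard ≤ ES.toFinset.card := by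
      rw [← Set.ncard_eq_toFinset_card']
      omega
    obtain ⟨S, hSsub, hScard⟩ := Finset.exists_subset_card_eq hcard
    have hSES : ∀ e ∈ S, e ∈ ES := fun e he => by
      have := hSsub he
      rwa [Set.mem_toFinset] at this
    have hUco : (U.toFinset : Set (Fin n)) = U := Set.coe_toFinset U
    have hU'co : (U'.toFinset : Set (Fin n)) = U' := Set.coe_toFinset U'
    have hUcard : U.toFinset.card = U.ncard := (Set.ncard_eq_toFinset_card' U).symm
    have hU'card : U'.toFinset.card = U'.ncard := (Set.ncard_eq_toFinset_card' U').symm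
    refine ⟨(w.1, U'.toFinset, U.toFinset, S), ?_, rfl, ?_⟩
    · rw [hA, Finset.mem_filter]
      refine ⟨Finset.mem_univ _, hwreg.1, ?_, ?_, ?_, ?_, ?_, ?_, ?_, ?_⟩
      · rw [hUcard]
        exact hd4u
      · rw [hUcard]
        exact hU1
      · rw [hU'card, hUcard]
        have h1 : (U'.ncard : ℝ) ≤ 4*(U.ncard:ℝ)/(d:ℝ) := hU'1
        rw [le_div_iff₀ hd0R] at h1
        exact h1
      · rw [hUco, hU'co]
        exact hU'2
      · intro e he
        rw [Finset.mem_sym2_iff]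
        intro a ha
        rw [Set.mem_toFinset]
        exact (hSES e he).2 a ha
      · rw [hScard, hUcard]
      · intro e he
        exact SimpleGraph.not_isDiag_of_mem_edgeSet _ (hSES e he).1
      · intro e he
        have h1 := (hSES e he).1
        rw [SimpleGraph.edgeSet_sdiff] at h1
        exact h1.2
    · intro e he
      have h1 := (hSES e he).1
      rw [SimpleGraph.edgeSet_sdiff] at h1
      exact h1.1
  have hub := prEvent_le_sum ν _ A
    (fun i w => w.1 = i.1 ∧ ((i.2.2.2 : Set (Sym2 (Fin n))) ⊆ w.2.edgeSet)) hdecomp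
  refine le_trans hub ?_
  have hstep1 : ∀ i ∈ A,
      prEvent ν (fun w => w.1 = i.1 ∧ ((i.2.2.2 : Set (Sym2 (Fin n))) ⊆ w.2.edgeSet))
        = (N : ℝ≥0∞)⁻¹ * ENNReal.ofReal (p ^ i.2.2.2.card) := by
    intro i hi
    rw [hA, Finset.mem_filter] at hi
    obtain ⟨-, hAdm⟩ := hi
    exact prEvent_atom ν hν hp0 hp1 i.1 hAdm.1 i.2.2.2 hAdm.2.2.2.2.2.2.2.1
      hAdm.2.2.2.2.2.2.2.2
  rw [Finset.sum_congr rfl hstep1, hA, Finset.sum_filter, Fintype.sum_prod_type]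
  have hinner : ∀ K₀ : SimpleGraph (Fin n),
      (∑ t : Finset (Fin n) × Finset (Fin n) × Finset (Sym2 (Fin n)),
        if AdmPred n d lam δ (K₀, t) then (N : ℝ≥0∞)⁻¹ * ENNReal.ofReal (p ^ t.2.2.card) else 0)
      ≤ (if IsRegularGraph K₀ d then (N : ℝ≥0∞)⁻¹ * ENNReal.ofReal (c / (n:ℝ)^14) else 0) := by
    intro K₀
    by_cases hreg : IsRegularGraph K₀ d
    · rw [if_pos hreg]
      have h1 : ∀ t : Finset (Fin n) × Finset (Fin n) × Finset (Sym2 (Fin n)),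
          (if AdmPred n d lam δ (K₀,t) then (N:ℝ≥0∞)⁻¹ * ENNReal.ofReal (p ^ t.2.2.card) else 0)
          = (N:ℝ≥0∞)⁻¹ * ENNReal.ofReal
              (if AdmPred n d lam δ (K₀,t) then p ^ t.2.2.card else 0) := by
        intro t
        by_cases hadm : AdmPred n d lam δ (K₀,t)
        · rw [if_pos hadm, if_pos hadm]
        · rw [if_neg hadm, if_neg hadm]
          simp
      rw [Finset.sum_congr rfl (fun t _ => h1 t), ← Finset.mul_sum,
        ← ENNReal.ofReal_sum_of_nonneg (fun t _ => by positivity)]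
      exact mul_le_mul_right (ENNReal.ofReal_le_ofReal
        (inner_real_bound hc hcn hL hlam0 hlam2 hd hm1 hδ hp0 hp4 K₀ hreg)) _
    · rw [if_neg hreg]
      apply le_of_eq
      apply Finset.sum_eq_zero
      intro t _
      rw [if_neg]
      intro hadm
      exact hreg hadm.1
  refine le_trans (Finset.sum_le_sum (fun K₀ _ => hinner K₀)) ?_
  rw [← Finset.sum_filter, Finset.sum_const, nsmul_eq_mul]
  have hNeq : (((Finset.univ : Finset (SimpleGraph (Fin n))).filter
      (fun G => IsRegularGraph G d)).card : ℝ≥0∞) = (N : ℝ≥0∞) := by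
    rw [hN]
    norm_cast
    rw [Set.ncard_eq_toFinset_card']
    congr 1
    simp [Set.toFinset_setOf]
  rw [hNeq, ← mul_assoc]
  calc (N:ℝ≥0∞) * (N:ℝ≥0∞)⁻¹ * ENNReal.ofReal (c / (n:ℝ)^14)
      ≤ 1 * ENNReal.ofReal (c / (n:ℝ)^14) := by
        apply mul_le_mul_left
        rcases eq_or_ne N 0 with h | h
        · simp [h]
        · rw [ENNReal.mul_inv_cancel (by exact_mod_cast h) (by simp)]
    _ = ENNReal.ofReal (c / (n:ℝ)^14) := one_mul _


/-- **Lemma 6.6.** There is `c* > 0` such that for every `ε ∈ (0,1]` and every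
`σ ∈ (0,c*]` there is `C > 0` such that for every `c > 0` and all sufficiently large `n`:
with `(log n)⁻³ ≤ λ ≤ c*`, `10³d ≤ λn`, `d ≥ C log n`, `dn` even, `ε d n ≤ m ≤ n^{1+σ}`,
`δ = 2m/n` with `λδ ≥ C log n`, `p = m(binom(n,2) − dn/2)⁻¹`, and `(K,F)` with
`K ~ G_d(n)`, `F = K + E`, with probability at least `1 − c n⁻¹⁴`: for each `U` with
`|U| ≤ λn/(100 δ log n)`, if there is `U'` with `|U'| ≤ 4|U|/d` and `U ⊆ U' ∪ N_K(U')`,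
then `e_{F∖K}(U) ≤ (λ/(2 log n))·δ|U|`. -/
theorem gnp_expansion_edges :
    ∃ cstar : ℝ, 0 < cstar ∧
      ∀ ε : ℝ, 0 < ε → ε ≤ 1 →
        ∀ σ : ℝ, 0 < σ → σ ≤ cstar →
          ∃ C : ℝ, 0 < C ∧
            ∀ c : ℝ, 0 < c →
              ∃ n₀ : ℕ, ∀ n : ℕ, n₀ ≤ n →
                ∀ lam : ℝ, ∀ d m : ℕ,
                  ((Real.log n) ^ 3)⁻¹ ≤ lam → lam ≤ cstar →
                  10 ^ 3 * (d : ℝ) ≤ lam * n → C * Real.log n ≤ (d : ℝ) → Even (d * n) →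
                  ε * d * n ≤ (m : ℝ) → (m : ℝ) ≤ (n : ℝ) ^ ((1 : ℝ) + σ) →
                  ∀ δ p : ℝ, δ = 2 * (m : ℝ) / n → C * Real.log n ≤ lam * δ →
                    p = (m : ℝ) / ((n.choose 2 : ℝ) - d * n / 2) →
                    ∀ ν : PMF (SimpleGraph (Fin n) × SimpleGraph (Fin n)),
                      IsRegAddGnp ν d p →
                      ENNReal.ofReal (1 - c / (n : ℝ) ^ 14) ≤
                        prEvent ν (fun w =>
                          ∀ U : Set (Fin n),
                            (U.ncard : ℝ) ≤ lam * n / (100 * δ * Real.log n) →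
                            (∃ U' : Set (Fin n), (U'.ncard : ℝ) ≤ 4 * U.ncard / d ∧
                                U ⊆ U' ∪ nbhd w.1 U') →
                              (edgesWithin (w.2 \ w.1) U : ℝ) ≤
                                lam / (2 * Real.log n) * δ * U.ncard) := by
  classical
  refine ⟨1/2, by norm_num, ?_⟩
  intro ε hε0 hε1 σ hσ0 hσ1
  refine ⟨100, by norm_num, ?_⟩
  intro c hc
  refine ⟨max (10^6) (Nat.ceil (2/c) + 1), ?_⟩
  intro n hn lam d m hlam1 hlam2 hdlam hdC hdeven hm1 hm2 δ p hδ hld hp ν hν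
  have hn6 : (10:ℕ)^6 ≤ n := le_trans (le_max_left _ _) hn
  have hn6R : (10:ℝ)^6 ≤ (n:ℝ) := by exact_mod_cast hn6
  have hn1 : 1 ≤ n := by omega
  have hn0R : (0:ℝ) < n := by
    have : (0:ℝ) < 10^6 := by norm_num
    linarith
  have hcn : 2 / c ≤ (n:ℝ) := by
    have h1 : (Nat.ceil (2/c) + 1 : ℕ) ≤ n := le_trans (le_max_right _ _) hn
    have h2 : (2/c : ℝ) ≤ Nat.ceil (2/c) := Nat.le_ceil _
    have h3 : ((Nat.ceil (2/c) : ℕ) : ℝ) ≤ n := by exact_mod_cast le_trans (Nat.le_succ _) h1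
    linarith
  have hL : 13 ≤ Real.log n := by
    have h1 : Real.exp 13 = Real.exp 1 ^ (13:ℕ) := by
      rw [← Real.exp_nat_mul]; norm_num
    have h2 : Real.exp 1 ^ (13:ℕ) ≤ 2.7182818286 ^ (13:ℕ) := by
      apply pow_le_pow_left₀ (le_of_lt (Real.exp_pos 1)) (le_of_lt Real.exp_one_lt_d9)
    have h3 : (2.7182818286:ℝ) ^ (13:ℕ) < (10:ℝ)^6 := by norm_num
    have he13 : Real.exp 13 < (10:ℝ)^6 := by rw [h1]; linarith
    have := (Real.lt_log_iff_exp_lt hn0R).2 (lt_of_lt_of_le he13 hn6R)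
    linarith
  have hLpos : (0:ℝ) < Real.log n := by linarith
  have hlam0 : 0 < lam := lt_of_lt_of_le (by positivity) hlam1
  have hdR : 100 * Real.log n ≤ (d:ℝ) := hdC
  have hd1300 : (1300:ℝ) ≤ (d:ℝ) := by nlinarith
  have hd0 : (0:ℕ) < d := by
    rcases Nat.eq_zero_or_pos d with h | h
    · rw [h] at hd1300
      norm_num at hd1300
    · exact h
  have hd2000 : (d:ℝ) ≤ (n:ℝ) / 2000 := by nlinarith [hdlam]
  have hmpos : (0:ℝ) < m := by
    have h1 : (0:ℝ) < ε * d * n := by positivity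
    linarith
  have hm1' : 1 ≤ m := by
    rcases Nat.eq_zero_or_pos m with h | h
    · rw [h] at hmpos
      norm_num at hmpos
    · exact h
  have hc2 : ((n.choose 2 : ℕ) : ℝ) = (n:ℝ) * ((n:ℝ) - 1) / 2 := by
    rw [Nat.cast_choose_two]
  have hD : (n:ℝ)^2/4 ≤ (n.choose 2 : ℝ) - d * n / 2 := by
    rw [hc2]
    exact hD_aux hn6R hd2000
  have hDpos : (0:ℝ) < (n.choose 2 : ℝ) - d * n / 2 := by
    have h9 : (0:ℝ) < (n:ℝ)^2/4 := by positivity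
    linarith
  have hp0 : 0 ≤ p := by
    rw [hp]
    positivity
  have hp4 : p ≤ 4 * m / (n:ℝ)^2 := by
    rw [hp, div_le_div_iff₀ hDpos (by positivity)]
    nlinarith
  have hm32 : (m:ℝ) ≤ (n:ℝ) ^ ((3:ℝ)/2) :=
    hm2.trans (Real.rpow_le_rpow_of_exponent_le (by exact_mod_cast hn1) (by linarith))
  have hmsq : (m:ℝ)^2 ≤ (n:ℝ)^3 := by
    have h1 : ((n:ℝ) ^ ((3:ℝ)/2))^2 = (n:ℝ)^(3:ℕ) := by
      rw [← Real.rpow_natCast ((n:ℝ) ^ ((3:ℝ)/2)) 2, ← Real.rpow_mul (le_of_lt hn0R),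
        ← Real.rpow_natCast (n:ℝ) 3]
      norm_num
    calc (m:ℝ)^2 ≤ ((n:ℝ) ^ ((3:ℝ)/2))^2 := by
          apply pow_le_pow_left₀ (le_of_lt hmpos) hm32
      _ = (n:ℝ)^3 := h1
  have h4m : 4 * (m:ℝ) ≤ (n:ℝ)^2 := h4m_aux hn6R hmpos hmsq
  have hp1 : p ≤ 1 := by
    rw [hp, div_le_one hDpos]
    linarith
  have hbad := bad_prob_bound hc hcn hL hlam0 hlam2 hdR hm1' hδ hld hp0 hp1 hp4 ν hν
  set P : SimpleGraph (Fin n) × SimpleGraph (Fin n) → Prop := fun w =>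
    ∀ U : Set (Fin n),
      (U.ncard : ℝ) ≤ lam * n / (100 * δ * Real.log n) →
      (∃ U' : Set (Fin n), (U'.ncard : ℝ) ≤ 4 * U.ncard / d ∧ U ⊆ U' ∪ nbhd w.1 U') →
      (edgesWithin (w.2 \ w.1) U : ℝ) ≤ lam / (2 * Real.log n) * δ * U.ncard with hP
  have hsplit := prEvent_add_compl ν P
  have hb1 : prEvent ν (fun a => ¬ P a) ≤ ENNReal.ofReal (c / (n:ℝ)^14) := hbad
  have hone : prEvent ν P = 1 - prEvent ν (fun a => ¬ P a) := by
    have hle : prEvent ν (fun a => ¬ P a) ≤ 1 := by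
      rw [← hsplit]
      exact le_add_self
    rw [← hsplit]
    rw [ENNReal.add_sub_cancel_right]
    intro h
    rw [h] at hle
    exact (by simp : ¬ (⊤:ℝ≥0∞) ≤ 1) hle
  rw [hone]
  by_cases hcase : c / (n:ℝ)^14 ≤ 1
  · have h1 : ENNReal.ofReal (1 - c / (n:ℝ)^14) + ENNReal.ofReal (c / (n:ℝ)^14)
        = 1 := by
      rw [← ENNReal.ofReal_add (by linarith) (by positivity)]
      simp
    have h2 : ENNReal.ofReal (1 - c / (n:ℝ)^14) = 1 - ENNReal.ofReal (c / (n:ℝ)^14) := by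
      rw [← h1, ENNReal.add_sub_cancel_right ENNReal.ofReal_ne_top]
    rw [h2]
    exact tsub_le_tsub_left hb1 1
  · push_neg at hcase
    have : (1:ℝ) - c / (n:ℝ)^14 ≤ 0 := by linarith
    rw [ENNReal.ofReal_eq_zero.2 this]
    exact zero_le

end Sandwich
end
end
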